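/- arXiv:2402.09851 — 2 statements merged into one kernel-verified Lean document; each statement's English description precedes it below -/
import Mathlib

section
/- Let M be a matroid on E with circuit-hyperplane S0, and let M⁻ be the relaxation of M obtained by setting rank_{M⁻}(S0) = rank(M) while keeping all other ranks. Then χ(M⁻;λ) = χ(M;λ) + (−1)^{rank(M)−1}(λ − 1). -/
open Polynomial

/-- The characteristic polynomial `χ(M;λ) = Σ_{S ⊆ E} (−1)^{|S|} λ^{corank(S)}`. -/
noncomputable def charPoly {α : Type*} [DecidableEq α] (E : Finset α)
    (rank : Finset α → ℕ) : Polynomial ℤ :=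
  ∑ S ∈ E.powerset, (-1 : Polynomial ℤ) ^ S.card * X ^ (rank E - rank S)

/-- If `M⁻` is obtained from `M` by relaxing a circuit-hyperplane
`S₀`, then `χ(M⁻;λ) = χ(M;λ) + (−1)^{rank(M)−1}(λ − 1)`. -/
theorem stmt_9 {α : Type*} [DecidableEq α] (E : Finset α) (rank : Finset α → ℕ)
    (hle : ∀ S ⊆ E, rank S ≤ S.card)
    (hmono : ∀ S₁ S₂ : Finset α, S₁ ⊆ S₂ → S₂ ⊆ E → rank S₁ ≤ rank S₂)
    (hsub : ∀ S₁ S₂ : Finset α, S₁ ⊆ E → S₂ ⊆ E →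
      rank (S₁ ∩ S₂) + rank (S₁ ∪ S₂) ≤ rank S₁ + rank S₂)
    (S₀ : Finset α) (hS₀E : S₀ ⊆ E)
    (hrk : rank S₀ + 1 = rank E)
    (hcard : rank S₀ + 1 = S₀.card)
    (hup : ∀ e₁ ∈ E \ S₀, rank (insert e₁ S₀) = rank E)
    (hdown : ∀ e₂ ∈ S₀, rank (S₀.erase e₂) = rank S₀) :
    charPoly E (fun S => if S = S₀ then rank E else rank S)
      = charPoly E rank + (-1 : Polynomial ℤ) ^ (rank E - 1) * (X - 1) := by
  have hES : E ≠ S₀ := by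
    intro h
    rw [h] at hrk
    omega
  have hmem : S₀ ∈ E.powerset := Finset.mem_powerset.mpr hS₀E
  unfold charPoly
  rw [← Finset.sum_erase_add _ _ hmem, ← Finset.sum_erase_add _ _ hmem]
  have hsum : ∑ S ∈ (E.powerset.erase S₀),
      (-1 : Polynomial ℤ) ^ S.card * X ^ ((if E = S₀ then rank E else rank E)
        - (if S = S₀ then rank E else rank S))
      = ∑ S ∈ (E.powerset.erase S₀), (-1 : Polynomial ℤ) ^ S.card * X ^ (rank E - rank S) := by
    apply Finset.sum_congr rfl
    intro S hS
    have h1 : S ≠ S₀ := Finset.ne_of_mem_erase hS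
    simp [h1]
  simp only [if_neg hES] at hsum ⊢
  rw [hsum]
  simp only [if_true, Nat.sub_self, pow_zero, mul_one]
  have h1 : rank E - rank S₀ = 1 := by omega
  have h2 : S₀.card = rank S₀ + 1 := by omega
  have h3 : rank E - 1 = rank S₀ := by omega
  rw [h1, h2, h3, pow_one]
  ring
end

section
/- The relaxation M⁻ of a matroid M at a circuit-hyperplane S0 is a matroid; i.e., rank_{M⁻} satisfies the matroid rank axioms (boundedness by cardinality, monotonicity, and submodularity). -/
/-- The relaxation `M⁻` of a matroid `M` at a circuit-hyperplane
`S₀` (defined by `rank⁻ S = rank S` for `S ≠ S₀` and `rank⁻ S₀ = rank E`) is a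
matroid: its rank function is bounded by cardinality, monotone and submodular. -/
theorem stmt_10 {α : Type*} [DecidableEq α] (E : Finset α) (rank : Finset α → ℕ)
    (hle : ∀ S ⊆ E, rank S ≤ S.card)
    (hmono : ∀ S₁ S₂ : Finset α, S₁ ⊆ S₂ → S₂ ⊆ E → rank S₁ ≤ rank S₂)
    (hsub : ∀ S₁ S₂ : Finset α, S₁ ⊆ E → S₂ ⊆ E →
      rank (S₁ ∩ S₂) + rank (S₁ ∪ S₂) ≤ rank S₁ + rank S₂)
    (S₀ : Finset α) (hS₀E : S₀ ⊆ E)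
    (hrk : rank S₀ + 1 = rank E)
    (hcard : rank S₀ + 1 = S₀.card)
    (hup : ∀ e₁ ∈ E \ S₀, rank (insert e₁ S₀) = rank E)
    (hdown : ∀ e₂ ∈ S₀, rank (S₀.erase e₂) = rank S₀) :
    (∀ S ⊆ E, (if S = S₀ then rank E else rank S) ≤ S.card) ∧
    (∀ S₁ S₂ : Finset α, S₁ ⊆ S₂ → S₂ ⊆ E →
      (if S₁ = S₀ then rank E else rank S₁) ≤ (if S₂ = S₀ then rank E else rank S₂)) ∧
    (∀ S₁ S₂ : Finset α, S₁ ⊆ E → S₂ ⊆ E →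
      (if S₁ ∩ S₂ = S₀ then rank E else rank (S₁ ∩ S₂))
          + (if S₁ ∪ S₂ = S₀ then rank E else rank (S₁ ∪ S₂))
        ≤ (if S₁ = S₀ then rank E else rank S₁)
          + (if S₂ = S₀ then rank E else rank S₂)) := by
  -- Subsets of a set of full rank (= cardinality) are themselves of full rank.
  have indep : ∀ A, A ⊆ E → rank A = A.card → ∀ B, B ⊆ A → rank B = B.card := by
    intro A hAE hA B hBA
    have h1 := hsub B (A \ B) (hBA.trans hAE) (Finset.sdiff_subset.trans hAE)
    rw [Finset.inter_sdiff_self, Finset.union_sdiff_of_subset hBA] at h1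
    have h2 : rank (A \ B) ≤ (A \ B).card := hle _ (Finset.sdiff_subset.trans hAE)
    have h3 : (A \ B).card = A.card - B.card := Finset.card_sdiff_of_subset hBA
    have h4 : rank B ≤ B.card := hle _ (hBA.trans hAE)
    have h5 : B.card ≤ A.card := Finset.card_le_card hBA
    omega
  -- Proper subsets of the circuit S₀ are independent.
  have hproper : ∀ A, A ⊆ S₀ → A ≠ S₀ → rank A = A.card := by
    intro A hA hne
    obtain ⟨e, heS0, heA⟩ : ∃ e ∈ S₀, e ∉ A := by
      by_contra h; push_neg at h
      exact hne (Finset.Subset.antisymm hA h)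
    have hAe : A ⊆ S₀.erase e :=
      fun x hx => Finset.mem_erase.2 ⟨fun h => heA (h ▸ hx), hA hx⟩
    have hfull : rank (S₀.erase e) = (S₀.erase e).card := by
      rw [hdown e heS0, Finset.card_erase_of_mem heS0]; omega
    exact indep _ ((Finset.erase_subset _ _).trans hS₀E) hfull A hAe
  -- Proper supersets of the hyperplane S₀ have full rank.
  have hsup : ∀ T, S₀ ⊆ T → T ⊆ E → T ≠ S₀ → rank T = rank E := by
    intro T hST hTE hne
    obtain ⟨e, heT, heS0⟩ : ∃ e ∈ T, e ∉ S₀ := by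
      by_contra h; push_neg at h
      exact hne (Finset.Subset.antisymm h hST)
    have h1 : rank (insert e S₀) = rank E := hup e (Finset.mem_sdiff.2 ⟨hTE heT, heS0⟩)
    have h2 : rank (insert e S₀) ≤ rank T := hmono _ _ (Finset.insert_subset heT hST) hTE
    have h3 : rank T ≤ rank E := hmono T E hTE subset_rfl
    omega
  refine ⟨?_, ?_, ?_⟩
  · -- bounded by cardinality
    intro S hSE
    split_ifs with h
    · subst h; omega
    · exact hle S hSE
  · -- monotone
    intro S₁ S₂ h12 h2E
    split_ifs with h1 h2 h2
    · exact le_rfl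
    · exact (hsup S₂ (h1 ▸ h12) h2E h2).ge
    · have := hmono S₁ S₀ (h2 ▸ h12) hS₀E
      omega
    · exact hmono S₁ S₂ h12 h2E
  · -- submodular
    intro S₁ S₂ h1E h2E
    have hiE : S₁ ∩ S₂ ⊆ E := Finset.inter_subset_left.trans h1E
    have huE : S₁ ∪ S₂ ⊆ E := Finset.union_subset h1E h2E
    have hsm := hsub S₁ S₂ h1E h2E
    have hrE := hmono (S₁ ∪ S₂) E huE subset_rfl
    have hr1 : rank S₁ ≤ rank E := hmono S₁ E h1E subset_rfl
    have hr2 : rank S₂ ≤ rank E := hmono S₂ E h2E subset_rfl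
    by_cases hi : S₁ ∩ S₂ = S₀ <;> by_cases hu : S₁ ∪ S₂ = S₀
    · -- inter = union = S₀ forces S₁ = S₂ = S₀
      have h1 : S₁ = S₀ := Finset.Subset.antisymm (hu ▸ Finset.subset_union_left)
        (hi ▸ Finset.inter_subset_left)
      have h2 : S₂ = S₀ := Finset.Subset.antisymm (hu ▸ Finset.subset_union_right)
        (hi ▸ Finset.inter_subset_right)
      rw [if_pos hi, if_pos hu, if_pos h1, if_pos h2]
    · -- inter = S₀, union ≠ S₀ : both Sᵢ contain S₀
      have hs1 : S₀ ⊆ S₁ := hi ▸ Finset.inter_subset_left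
      have hs2 : S₀ ⊆ S₂ := hi ▸ Finset.inter_subset_right
      by_cases h1 : S₁ = S₀
      · have huu : S₁ ∪ S₂ = S₂ := by
          rw [h1]; exact Finset.union_eq_right.2 hs2
        have h2 : S₂ ≠ S₀ := fun h => hu (huu.trans h)
        rw [if_pos hi, if_neg hu, if_pos h1, if_neg h2, huu]
      · by_cases h2 : S₂ = S₀
        · have huu : S₁ ∪ S₂ = S₁ := by
            rw [h2]; exact Finset.union_eq_left.2 hs1
          rw [if_pos hi, if_neg hu, if_neg h1, if_pos h2, huu]
          omega
        · have r1 : rank S₁ = rank E := hsup S₁ hs1 h1E h1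
          have r2 : rank S₂ = rank E := hsup S₂ hs2 h2E h2
          rw [if_pos hi, if_neg hu, if_neg h1, if_neg h2]
          omega
    · -- union = S₀, inter ≠ S₀ : both Sᵢ contained in S₀
      have hs1 : S₁ ⊆ S₀ := hu ▸ Finset.subset_union_left
      have hs2 : S₂ ⊆ S₀ := hu ▸ Finset.subset_union_right
      by_cases h1 : S₁ = S₀
      · have hii : S₁ ∩ S₂ = S₂ := by
          rw [h1]; exact Finset.inter_eq_right.2 hs2
        have h2 : S₂ ≠ S₀ := fun h => hi (hii.trans h)
        rw [if_neg hi, if_pos hu, if_pos h1, if_neg h2, hii]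
        omega
      · by_cases h2 : S₂ = S₀
        · have hii : S₁ ∩ S₂ = S₁ := by
            rw [h2]; exact Finset.inter_eq_left.2 hs1
          rw [if_neg hi, if_pos hu, if_neg h1, if_pos h2, hii]
        · have r1 : rank S₁ = S₁.card := hproper S₁ hs1 h1
          have r2 : rank S₂ = S₂.card := hproper S₂ hs2 h2
          have ri : rank (S₁ ∩ S₂) = (S₁ ∩ S₂).card :=
            hproper _ ((Finset.inter_subset_left).trans hs1) hi
          have hcc : (S₁ ∩ S₂).card + (S₁ ∪ S₂).card = S₁.card + S₂.card :=
            Finset.card_inter_add_card_union S₁ S₂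
          have hucard : (S₁ ∪ S₂).card = S₀.card := by rw [hu]
          rw [if_neg hi, if_pos hu, if_neg h1, if_neg h2]
          omega
    · -- inter ≠ S₀, union ≠ S₀
      rw [if_neg hi, if_neg hu]
      split_ifs <;> omega
end
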